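/- arXiv:1602.05343 — 2 statements merged into one kernel-verified Lean document; each statement's English description precedes it below -/
import Mathlib

section
/- For every integer N ≥ 2 and every i with 2 ≤ i ≤ N, a(i,N) = Σ 2^{k_1+⋯+k_{i-1}} · ∏_{j=2}^{i} (N - (k_j + k_{j+1} + ⋯ + k_{i-1}) - (2i+2-j)/2)_{k_{j-1}} · (2(N - i - (k_1+⋯+k_{i-1})) - 1)!!, where the sum runs over all tuples (k_1, …, k_{i-1}) of nonnegative integers with k_1 + ⋯ + k_{i-1} ≤ N - i. -/
/-- The falling factorial `(y)_k = y(y-1)⋯(y-k+1)` of a real number, `(y)_0 = 1`. -/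
noncomputable def fallingFactorial (y : ℝ) (k : ℕ) : ℝ :=
  ∏ j ∈ Finset.range k, (y - (j : ℝ))

lemma ff_zero (y : ℝ) : fallingFactorial y 0 = 1 := by
  simp [fallingFactorial]

lemma ff_succ' (y : ℝ) (k : ℕ) :
    fallingFactorial y (k + 1) = y * fallingFactorial (y - 1) k := by
  unfold fallingFactorial
  rw [Finset.prod_range_succ']
  simp only [Nat.cast_zero, sub_zero]
  rw [mul_comm]
  congr 1
  apply Finset.prod_congr rfl
  intro j _
  push_cast
  ring

def Aset (n M : ℕ) : Finset (Fin n → ℕ) :=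
  (Fintype.piFinset fun _ : Fin n => Finset.range (M + 1)).filter (fun k => ∑ j, k j ≤ M)

lemma mem_Aset {n M : ℕ} (k : Fin n → ℕ) : k ∈ Aset n M ↔ ∑ j, k j ≤ M := by
  simp only [Aset, Finset.mem_filter, Fintype.mem_piFinset, Finset.mem_range]
  constructor
  · exact fun h => h.2
  · intro h
    refine ⟨fun j => Nat.lt_succ_of_le (le_trans ?_ h), h⟩
    exact Finset.single_le_sum (fun _ _ => Nat.zero_le _) (Finset.mem_univ j)

lemma Aset_zero (M : ℕ) : Aset 0 M = {fun j : Fin 0 => j.elim0} := by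
  apply Finset.ext
  intro k
  simp only [Finset.mem_singleton]
  rw [mem_Aset]
  constructor
  · intro _; funext j; exact j.elim0
  · intro _; simp

lemma sum_Aset_succ {n M : ℕ} (f : (Fin (n + 1) → ℕ) → ℝ) :
    ∑ k ∈ Aset (n + 1) M, f k
      = ∑ m ∈ Finset.range (M + 1), ∑ k ∈ Aset n (M - m), f (Fin.snoc k m) := by
  rw [Finset.sum_sigma' (Finset.range (M + 1)) (fun m => Aset n (M - m))
    (fun m k => f (Fin.snoc k m))]
  apply Finset.sum_bij'
    (i := fun k (_ : k ∈ Aset (n+1) M) =>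
      (⟨k (Fin.last n), Fin.init k⟩ : Σ _m : ℕ, Fin n → ℕ))
    (j := fun p _ => Fin.snoc p.2 p.1)
  · intro k hk
    rw [mem_Aset] at hk
    have hsum : ∑ j, k j = (∑ j : Fin n, Fin.init k j) + k (Fin.last n) := by
      rw [Fin.sum_univ_castSucc]; rfl
    simp only [Finset.mem_sigma, Finset.mem_range, mem_Aset]
    exact ⟨by omega, by omega⟩
  · intro p hp
    simp only [Finset.mem_sigma, Finset.mem_range] at hp
    obtain ⟨hm, hk⟩ := hp
    rw [mem_Aset] at hk ⊢
    have : ∑ j, Fin.snoc p.2 p.1 j = (∑ j : Fin n, p.2 j) + p.1 := by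
      rw [Fin.sum_univ_castSucc]
      simp [Fin.snoc_castSucc, Fin.snoc_last]
    omega
  · intro k _
    exact Fin.snoc_init_self k
  · intro p _
    simp only [Fin.snoc_last, Fin.init_snoc]
  · intro k _
    rw [Fin.snoc_init_self k]

section Rec
variable (a : ℕ → ℕ → ℝ)
    (ha11 : a 1 1 = 1)
    (ha1 : ∀ N : ℕ, 1 ≤ N → a 1 (N + 1) = (2 * (N : ℝ) - 1) * a 1 N)
    (hadiag : ∀ N : ℕ, 1 ≤ N → a (N + 1) (N + 1) = a N N)
    (harec : ∀ N i : ℕ, 2 ≤ i → i ≤ N →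
      a i (N + 1) = a (i - 1) N + (2 * (N : ℝ) - (i : ℝ)) * a i N)

include ha11 ha1 in
lemma L0 : ∀ N : ℕ, 1 ≤ N → a 1 N = ((2 * (N - 1) - 1).doubleFactorial : ℝ) := by
  intro N hN
  induction N, hN using Nat.le_induction with
  | base => rw [ha11]; norm_num [Nat.doubleFactorial]
  | succ N hN ih =>
    rw [ha1 N hN, ih]
    rcases Nat.lt_or_ge N 2 with h2 | h2
    · interval_cases N
      norm_num [Nat.doubleFactorial]
    · rw [show 2 * (N + 1 - 1) - 1 = (2 * (N - 1) - 1) + 2 from by omega,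
        Nat.doubleFactorial_add_two]
      push_cast
      rw [show ((2 * (N - 1) - 1 : ℕ) : ℝ) = 2 * (N : ℝ) - 3 from by
        have : (2 * (N - 1) - 1 : ℕ) = 2 * N - 3 := by omega
        rw [this]; push_cast [Nat.cast_sub (by omega : 3 ≤ 2 * N)]; ring]
      ring

include hadiag harec in
lemma L1 : ∀ i : ℕ, 2 ≤ i → ∀ N : ℕ, i ≤ N →
    a i N = ∑ m ∈ Finset.range (N - i + 1),
      2 ^ m * fallingFactorial ((N : ℝ) - 1 - (i : ℝ) / 2) m * a (i - 1) (N - 1 - m) := by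
  intro i hi N hN
  induction N, hN using Nat.le_induction with
  | base =>
    rw [show i - i + 1 = 1 from by omega, Finset.sum_range_one]
    simp only [pow_zero, ff_zero, one_mul, Nat.sub_zero]
    have := hadiag (i - 1) (by omega)
    rw [show i - 1 + 1 = i from by omega] at this
    exact this
  | succ N hN ih =>
    rw [harec N i hi hN]
    rw [show N + 1 - i + 1 = (N - i + 1) + 1 from by omega, Finset.sum_range_succ']
    have h0 : 2 ^ 0 * fallingFactorial (((N + 1 : ℕ) : ℝ) - 1 - (i : ℝ) / 2) 0
        * a (i - 1) (N + 1 - 1 - 0) = a (i - 1) N := by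
      simp [ff_zero]
    rw [h0, ih, Finset.mul_sum, add_comm]
    congr 1
    apply Finset.sum_congr rfl
    intro m hm
    rw [Finset.mem_range] at hm
    rw [show N + 1 - 1 - (m + 1) = N - 1 - m from by omega]
    rw [ff_succ']
    have hy : ((N + 1 : ℕ) : ℝ) - 1 - (i : ℝ) / 2 - 1 = (N : ℝ) - 1 - (i : ℝ) / 2 := by
      push_cast; ring
    rw [hy]
    have hy2 : ((N + 1 : ℕ) : ℝ) - 1 - (i : ℝ) / 2 = (N : ℝ) - (i : ℝ) / 2 := by
      push_cast; ring
    rw [hy2]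
    ring
end Rec


lemma ptwise (n N m : ℕ) (K K' : ℕ → ℕ)
    (hKK' : ∀ j : ℕ, 1 ≤ j → j ≤ n → K j = K' j)
    (hKtop : K (n + 1) = m)
    (hmN : m + (n + 1 + 1) ≤ N) :
    2 ^ m * fallingFactorial ((N : ℝ) - 1 - ((n + 1 + 1 : ℕ) : ℝ) / 2) m *
      ((2 ^ (∑ j ∈ Finset.Icc 1 n, K' j) *
          ∏ j ∈ Finset.Icc 2 (n + 1),
            fallingFactorial
              (((N - 1 - m : ℕ) : ℝ) - (∑ l ∈ Finset.Icc j n, (K' l : ℝ)) -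
                (2 * ((n + 1 : ℕ) : ℝ) + 2 - (j : ℝ)) / 2)
              (K' (j - 1))) *
        ((2 * (N - (n + 1 + 1) - m - ∑ j ∈ Finset.Icc 1 n, K' j) - 1).doubleFactorial : ℝ))
    = 2 ^ (∑ j ∈ Finset.Icc 1 (n + 1), K j) *
        (∏ j ∈ Finset.Icc 2 (n + 1 + 1),
          fallingFactorial
            ((N : ℝ) - (∑ l ∈ Finset.Icc j (n + 1), (K l : ℝ)) -
              (2 * ((n + 1 + 1 : ℕ) : ℝ) + 2 - (j : ℝ)) / 2)
            (K (j - 1))) *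
        ((2 * (N - (n + 1 + 1) - ∑ j ∈ Finset.Icc 1 (n + 1), K j) - 1).doubleFactorial : ℝ) := by
  have hS : ∑ j ∈ Finset.Icc 1 (n + 1), K j = (∑ j ∈ Finset.Icc 1 n, K' j) + m := by
    rw [Finset.sum_Icc_succ_top (by omega) K, hKtop]
    congr 1
    apply Finset.sum_congr rfl
    intro j hj
    rw [Finset.mem_Icc] at hj
    exact hKK' j hj.1 hj.2
  have hc : ((N - 1 - m : ℕ) : ℝ) = (N : ℝ) - 1 - (m : ℝ) := by
    rw [show N - 1 - m = N - (m + 1) from by omega, Nat.cast_sub (by omega)]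
    push_cast; ring
  have hP : (∏ j ∈ Finset.Icc 2 (n + 1 + 1),
        fallingFactorial
          ((N : ℝ) - (∑ l ∈ Finset.Icc j (n + 1), (K l : ℝ)) -
            (2 * ((n + 1 + 1 : ℕ) : ℝ) + 2 - (j : ℝ)) / 2)
          (K (j - 1)))
      = (∏ j ∈ Finset.Icc 2 (n + 1),
          fallingFactorial
            (((N - 1 - m : ℕ) : ℝ) - (∑ l ∈ Finset.Icc j n, (K' l : ℝ)) -
              (2 * ((n + 1 : ℕ) : ℝ) + 2 - (j : ℝ)) / 2)
            (K' (j - 1)))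
        * fallingFactorial ((N : ℝ) - 1 - ((n + 1 + 1 : ℕ) : ℝ) / 2) m := by
    rw [Finset.prod_Icc_succ_top (by omega)]
    congr 1
    · apply Finset.prod_congr rfl
      intro j hj
      rw [Finset.mem_Icc] at hj
      have hsumj : ∑ l ∈ Finset.Icc j (n + 1), (K l : ℝ)
          = (∑ l ∈ Finset.Icc j n, (K' l : ℝ)) + (m : ℝ) := by
        rw [Finset.sum_Icc_succ_top (by omega), hKtop]
        congr 1
        apply Finset.sum_congr rfl
        intro l hl
        rw [Finset.mem_Icc] at hl
        rw [hKK' l (by omega) hl.2]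
      rw [hsumj, hKK' (j - 1) (by omega) (by omega), hc]
      congr 1
      push_cast
      ring
    · have harg : (N : ℝ) - (∑ l ∈ Finset.Icc (n + 1 + 1) (n + 1), (K l : ℝ)) -
          (2 * ((n + 1 + 1 : ℕ) : ℝ) + 2 - ((n + 1 + 1 : ℕ) : ℝ)) / 2
          = (N : ℝ) - 1 - ((n + 1 + 1 : ℕ) : ℝ) / 2 := by
        rw [Finset.Icc_eq_empty (by omega), Finset.sum_empty]
        push_cast; ring
      rw [show n + 1 + 1 - 1 = n + 1 from rfl, hKtop, harg]
  rw [hS, hP]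
  rw [show 2 * (N - (n + 1 + 1) - ((∑ j ∈ Finset.Icc 1 n, K' j) + m)) - 1
      = 2 * (N - (n + 1 + 1) - m - ∑ j ∈ Finset.Icc 1 n, K' j) - 1 from by omega]
  ring

section Key
variable (a : ℕ → ℕ → ℝ)
    (ha11 : a 1 1 = 1)
    (ha1 : ∀ N : ℕ, 1 ≤ N → a 1 (N + 1) = (2 * (N : ℝ) - 1) * a 1 N)
    (hadiag : ∀ N : ℕ, 1 ≤ N → a (N + 1) (N + 1) = a N N)
    (harec : ∀ N i : ℕ, 2 ≤ i → i ≤ N →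
      a i (N + 1) = a (i - 1) N + (2 * (N : ℝ) - (i : ℝ)) * a i N)

include ha11 ha1 hadiag harec in
lemma key : ∀ n N : ℕ, n + 1 ≤ N →
    a (n + 1) N =
      ∑ k ∈ Aset n (N - (n + 1)),
        (fun K : ℕ → ℕ =>
          2 ^ (∑ j ∈ Finset.Icc 1 n, K j) *
            (∏ j ∈ Finset.Icc 2 (n + 1),
              fallingFactorial
                ((N : ℝ) - (∑ l ∈ Finset.Icc j n, (K l : ℝ)) -
                  (2 * ((n + 1 : ℕ) : ℝ) + 2 - (j : ℝ)) / 2)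
                (K (j - 1))) *
            (Nat.doubleFactorial (2 * (N - (n + 1) - ∑ j ∈ Finset.Icc 1 n, K j) - 1) : ℝ))
        (fun m : ℕ => if h : m - 1 < n then k ⟨m - 1, h⟩ else 0) := by
  intro n
  induction n with
  | zero =>
    intro N hN
    rw [Aset_zero, Finset.sum_singleton, L0 a ha11 ha1 N hN]
    have e1 : Finset.Icc 1 0 = (∅ : Finset ℕ) := Finset.Icc_eq_empty (by omega)
    have e2 : Finset.Icc 2 (0 + 1) = (∅ : Finset ℕ) := Finset.Icc_eq_empty (by omega)
    simp [e1, e2]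
  | succ n ih =>
    intro N hN
    rw [sum_Aset_succ]
    have hL1 := L1 a hadiag harec (n + 1 + 1) (by omega) N hN
    rw [show n + 1 + 1 - 1 = n + 1 from rfl] at hL1
    rw [hL1]
    apply Finset.sum_congr rfl
    intro m hm
    rw [Finset.mem_range] at hm
    have hmM : m ≤ N - (n + 1 + 1) := by omega
    have hN' : n + 1 ≤ N - 1 - m := by omega
    rw [ih (N - 1 - m) hN']
    rw [show N - 1 - m - (n + 1) = N - (n + 1 + 1) - m from by omega]
    rw [Finset.mul_sum]
    apply Finset.sum_congr rfl
    intro k' hk'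
    have hk's : ∑ j, k' j ≤ N - (n + 1 + 1) - m := (mem_Aset k').1 hk'
    refine ptwise n N m _ _ ?_ ?_ (by omega)
    · intro j hj1 hjn
      have h1 : j - 1 < n := by omega
      have h2 : j - 1 < n + 1 := by omega
      simp only [dif_pos h1, dif_pos h2]
      have : (⟨j - 1, h2⟩ : Fin (n + 1)) = Fin.castSucc ⟨j - 1, h1⟩ := rfl
      rw [this, Fin.snoc_castSucc]
    · have h2 : n + 1 - 1 < n + 1 := by omega
      simp only [dif_pos h2]
      have : (⟨n + 1 - 1, h2⟩ : Fin (n + 1)) = Fin.last n := rfl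
      rw [this, Fin.snoc_last]
end Key

/-- the explicit formula, for `2 ≤ i ≤ N`,
`a(i,N) = Σ_{k_1 + ⋯ + k_{i-1} ≤ N-i} 2^{k_1+⋯+k_{i-1}}
  ∏_{j=2}^{i} (N - (k_j+⋯+k_{i-1}) - (2i+2-j)/2)_{k_{j-1}}
  (2(N - i - (k_1+⋯+k_{i-1})) - 1)!!`,
where `a` is the family defined by the recursion `a(1,1) = 1`,
`a(1,N+1) = (2N-1)a(1,N)`, `a(N+1,N+1) = a(N,N)`,
`a(i,N+1) = a(i-1,N) + (2N-i)a(i,N)` for `2 ≤ i ≤ N`.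
Tuples `(k_1, …, k_{i-1})` of nonnegative integers with sum `≤ N - i` are
encoded as members of a `Fintype.piFinset` (each component is then forced to lie
in `Finset.range (N - i + 1)`), filtered by the condition on the sum; the
`1`-based tuple `K` is recovered from `k : Fin (i-1) → ℕ` by `K m = k (m-1)`.
Since the sum of the `k_j` is at most `N - i`, the natural subtraction in
`2 * (N - i - Σ k_j) - 1` realizes the convention `(-1)!! = 0!! = 1`. -/
theorem stmt4
    (a : ℕ → ℕ → ℝ)
    (ha11 : a 1 1 = 1)
    (ha1 : ∀ N : ℕ, 1 ≤ N → a 1 (N + 1) = (2 * (N : ℝ) - 1) * a 1 N)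
    (hadiag : ∀ N : ℕ, 1 ≤ N → a (N + 1) (N + 1) = a N N)
    (harec : ∀ N i : ℕ, 2 ≤ i → i ≤ N →
      a i (N + 1) = a (i - 1) N + (2 * (N : ℝ) - (i : ℝ)) * a i N)
    (N i : ℕ) (hN : 2 ≤ N) (hi2 : 2 ≤ i) (hiN : i ≤ N) :
    a i N =
      ∑ k ∈ (Fintype.piFinset fun _ : Fin (i - 1) => Finset.range (N - i + 1)).filter
          (fun k => ∑ j, k j ≤ N - i),
        (fun K : ℕ → ℕ =>
          2 ^ (∑ j ∈ Finset.Icc 1 (i - 1), K j) *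
            (∏ j ∈ Finset.Icc 2 i,
              fallingFactorial
                ((N : ℝ) - (∑ l ∈ Finset.Icc j (i - 1), (K l : ℝ)) -
                  (2 * (i : ℝ) + 2 - (j : ℝ)) / 2)
                (K (j - 1))) *
            (Nat.doubleFactorial (2 * (N - i - ∑ j ∈ Finset.Icc 1 (i - 1), K j) - 1) : ℝ))
        (fun m : ℕ => if h : m - 1 < i - 1 then k ⟨m - 1, h⟩ else 0) := by
  obtain ⟨n, rfl⟩ : ∃ n, i = n + 1 := ⟨i - 1, by omega⟩
  exact key a ha11 ha1 hadiag harec n N (by omega)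
end

section
/- For every integer N ≥ 1, every integer n ≥ 0, and every real x ≠ 0, U_n^{(N+1)}(x) = (1/(2^N · N!)) · Σ_{i=1}^{N} a(i,N) · Σ_{l=0}^{n} Σ_{j=0}^{l+i} C(2N+n-l-i-1, n-l) · x^{i+l-2N-n} · (l+i)_i · p_j(x) · p_{l+i-j}(x), where x^{i+l-2N-n} is an integer (possibly negative) power of x. -/
/-- `D = 1 - 2x·t + t²` as a formal power series in `t` over `ℝ`. -/
noncomputable def Dser (x : ℝ) : PowerSeries ℝ :=
  1 - PowerSeries.C (2 * x) * PowerSeries.X + PowerSeries.X ^ 2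

open PowerSeries

noncomputable def Eser (x : ℝ) : PowerSeries ℝ := PowerSeries.C x - PowerSeries.X

lemma constCoeff_D (x : ℝ) : constantCoeff (Dser x) = 1 := by simp [Dser]
lemma constCoeff_E (x : ℝ) : constantCoeff (Eser x) = x := by simp [Eser]
lemma DinvD (x : ℝ) : Dser x * (Dser x)⁻¹ = 1 :=
  PowerSeries.mul_inv_cancel _ (by simp [constCoeff_D])
lemma EinvE {x : ℝ} (hx : x ≠ 0) : Eser x * (Eser x)⁻¹ = 1 :=
  PowerSeries.mul_inv_cancel _ (by simp [constCoeff_E, hx])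
lemma derivD (x : ℝ) : d⁄dX ℝ (Dser x) = -2 * Eser x := by
  have h1 : d⁄dX ℝ ((PowerSeries.C (2*x)) * X) = PowerSeries.C (2*x) := by
    rw [Derivation.leibniz]; simp [smul_eq_mul]
  have h2 : d⁄dX ℝ ((X : ℝ⟦X⟧) ^ 2) = 2 * X := by
    rw [Derivation.leibniz_pow]; simp [smul_eq_mul]
  have hC2 : (PowerSeries.C (R := ℝ)) 2 = 2 := map_ofNat _ 2
  have hCm : (PowerSeries.C (2*x)) = 2 * PowerSeries.C x := by
    rw [map_mul, hC2]
  rw [Dser, map_add, map_sub, h1, h2, hCm, Eser]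
  simp
  ring
lemma derivE (x : ℝ) : d⁄dX ℝ (Eser x) = -1 := by
  simp [Eser]
lemma deriv_dinv (x : ℝ) : d⁄dX ℝ (Dser x)⁻¹ = 2 * Eser x * ((Dser x)⁻¹) ^ 2 := by
  rw [PowerSeries.derivative_inv', derivD]; ring
lemma deriv_einv (x : ℝ) : d⁄dX ℝ (Eser x)⁻¹ = ((Eser x)⁻¹) ^ 2 := by
  rw [PowerSeries.derivative_inv', derivE]; ring

lemma hockey (m k : ℕ) : ∑ j ∈ Finset.range (k+1), Nat.choose (m+j) j = Nat.choose (m+k+1) k := by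
  induction k with
  | zero => simp
  | succ k ih =>
      rw [Finset.sum_range_succ, ih, ← add_assoc, Nat.choose_succ_succ' (m+k+1) k]

lemma einv_eq {x : ℝ} (hx : x ≠ 0) :
    (Eser x)⁻¹ = PowerSeries.mk (fun k => x ^ (-(1:ℤ) - k)) := by
  have h : Eser x * PowerSeries.mk (fun k => x ^ (-(1:ℤ) - k)) = 1 := by
    have hE : Eser x * PowerSeries.mk (fun k => x ^ (-(1:ℤ) - k)) =
        PowerSeries.C x * PowerSeries.mk (fun k => x ^ (-(1:ℤ) - k))
          - PowerSeries.X * PowerSeries.mk (fun k => x ^ (-(1:ℤ) - k)) := by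
      rw [Eser, sub_mul]
    ext n
    cases n with
    | zero =>
        rw [hE]
        simp [zpow_sub₀ hx]
        field_simp
    | succ n =>
        rw [hE, map_sub, PowerSeries.coeff_C_mul, PowerSeries.coeff_succ_X_mul]
        simp only [PowerSeries.coeff_mk, PowerSeries.coeff_one, Nat.succ_ne_zero, if_false]
        push_cast
        rw [show (-(1:ℤ) - (n:ℤ)) = 1 + (-(1:ℤ) - ((n:ℤ)+1)) by ring, zpow_add₀ hx, zpow_one]
        ring
  have h2 := PowerSeries.inv_mul_cancel (Eser x) (by simp [constCoeff_E, hx])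
  calc (Eser x)⁻¹ = (Eser x)⁻¹ * (Eser x * PowerSeries.mk (fun k => x ^ (-(1:ℤ) - k))) := by
        rw [h, mul_one]
    _ = ((Eser x)⁻¹ * Eser x) * PowerSeries.mk (fun k => x ^ (-(1:ℤ) - k)) := by
        rw [mul_assoc]
    _ = PowerSeries.mk (fun k => x ^ (-(1:ℤ) - k)) := by rw [h2, one_mul]

lemma coeff_einv_pow {x : ℝ} (hx : x ≠ 0) (m : ℕ) (hm : 1 ≤ m) (k : ℕ) :
    PowerSeries.coeff k ((Eser x)⁻¹ ^ m) =
      (Nat.choose (m - 1 + k) k : ℝ) * x ^ (-(m:ℤ) - k) := by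
  induction m generalizing k with
  | zero => omega
  | succ m ih =>
      rcases Nat.eq_or_lt_of_le hm with h1 | h1
      · -- m + 1 = 1, i.e. m = 0
        have hm0 : m = 0 := by omega
        subst hm0
        rw [pow_one, einv_eq hx]
        simp
      · have hm1 : 1 ≤ m := by omega
        rw [pow_succ, PowerSeries.coeff_mul,
          Finset.Nat.sum_antidiagonal_eq_sum_range_succ_mk]
        have hterm : ∀ j ∈ Finset.range (k+1),
            PowerSeries.coeff j ((Eser x)⁻¹ ^ m) * PowerSeries.coeff (k - j) (Eser x)⁻¹
            = (Nat.choose (m - 1 + j) j : ℝ) * x ^ (-((m:ℤ)+1) - k) := by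
          intro j hj
          have hjk : j ≤ k := by simpa using Nat.lt_succ_iff.mp (Finset.mem_range.mp hj)
          rw [ih hm1, einv_eq hx]
          simp only [PowerSeries.coeff_mk]
          rw [mul_assoc, ← zpow_add₀ hx]
          congr 2
          push_cast [Nat.cast_sub hjk]
          ring
        rw [Finset.sum_congr rfl hterm, ← Finset.sum_mul, ← Nat.cast_sum,
          hockey (m-1) k]
        have : m - 1 + k + 1 = m + 1 - 1 + k := by omega
        rw [this]
        push_cast
        ring_nf

lemma coeff_iter_deriv (f : ℝ⟦X⟧) (i : ℕ) : ∀ l : ℕ,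
    PowerSeries.coeff l ((d⁄dX ℝ)^[i] f) =
      fallingFactorial ((l:ℝ) + (i:ℝ)) i * PowerSeries.coeff (l + i) f := by
  induction i with
  | zero => intro l; simp [fallingFactorial]
  | succ i ih =>
      intro l
      rw [Function.iterate_succ_apply', PowerSeries.coeff_derivative, ih (l+1)]
      have hff : fallingFactorial ((l:ℝ) + ((i:ℝ)+1)) (i+1)
          = fallingFactorial (((l+1:ℕ):ℝ) + (i:ℝ)) i * ((l:ℝ)+1) := by
        rw [fallingFactorial, fallingFactorial, Finset.prod_range_succ]
        push_cast
        have : (l:ℝ) + ((i:ℝ)+1) - (i:ℝ) = (l:ℝ)+1 := by ring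
        rw [this]
        congr 1
        apply Finset.prod_congr rfl
        intro j hj; ring
      push_cast at hff ⊢
      rw [hff]
      have hl : l + 1 + i = l + (i+1) := by omega
      rw [hl]
      ring

lemma deriv_C_mul (r : ℝ) (f : ℝ⟦X⟧) :
    d⁄dX ℝ (PowerSeries.C r * f) = PowerSeries.C r * d⁄dX ℝ f := by
  rw [Derivation.leibniz, PowerSeries.derivative_C]; simp [smul_eq_mul]

lemma derivPowPS (f : ℝ⟦X⟧) (m : ℕ) :
    d⁄dX ℝ (f ^ m) = (m : ℝ⟦X⟧) * f ^ (m-1) * d⁄dX ℝ f := by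
  rw [Derivation.leibniz_pow]; simp [smul_eq_mul, nsmul_eq_mul]; ring

lemma Icc_bot_split (M : ℕ) (h : 1 ≤ M) :
    Finset.Icc 1 M = insert 1 (Finset.Icc 2 M) := by
  ext k; simp [Finset.mem_Icc]; omega

lemma Icc_top_split (N : ℕ) (h : 1 ≤ N) :
    Finset.Icc 2 (N+1) = insert (N+1) (Finset.Icc 2 N) := by
  ext k; simp [Finset.mem_Icc]; omega

lemma key_s7 (x : ℝ) (hx : x ≠ 0)
    (a : ℕ → ℕ → ℝ) (ha11 : a 1 1 = 1)
    (ha1 : ∀ N : ℕ, 1 ≤ N → a 1 (N + 1) = (2 * (N : ℝ) - 1) * a 1 N)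
    (hadiag : ∀ N : ℕ, 1 ≤ N → a (N + 1) (N + 1) = a N N)
    (harec : ∀ N i : ℕ, 2 ≤ i → i ≤ N →
      a i (N + 1) = a (i - 1) N + (2 * (N : ℝ) - (i : ℝ)) * a i N) :
    ∀ N : ℕ, 1 ≤ N →
    PowerSeries.C (2^N * (N.factorial : ℝ)) * ((Dser x)⁻¹)^(N+1) =
      ∑ i ∈ Finset.Icc 1 N, PowerSeries.C (a i N) *
        (((Eser x)⁻¹)^(2*N - i) * (d⁄dX ℝ)^[i] (Dser x)⁻¹) := by
  have hee : (Eser x)⁻¹ * Eser x = 1 := by rw [mul_comm]; exact EinvE hx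
  intro N
  induction N with
  | zero => omega
  | succ N ih =>
    intro _
    rcases Nat.eq_zero_or_pos N with h0 | hN
    · subst h0
      simp only [Finset.Icc_self, Finset.sum_singleton, ha11, map_one, one_mul,
        Function.iterate_one]
      rw [deriv_dinv]
      have hc : PowerSeries.C (2^1 * ((1).factorial : ℝ)) = 2 := by
        norm_num; exact map_ofNat _ 2
      rw [hc]
      have h21 : 2*1 - 1 = 1 := by norm_num
      rw [h21, pow_one]
      linear_combination (-2 * ((Dser x)⁻¹)^2) * hee
    · have H := ih hN
      -- abbreviations
      set dd := (Dser x)⁻¹ with hdd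
      set ee := (Eser x)⁻¹ with he
      set Dit : ℕ → ℝ⟦X⟧ := fun i => (d⁄dX ℝ)^[i] dd with hDit
      have hc : PowerSeries.C (2^(N+1) * ((N+1).factorial : ℝ))
          = 2 * ((N+1 : ℕ) : ℝ⟦X⟧) * PowerSeries.C (2^N * (N.factorial : ℝ)) := by
        rw [← map_natCast (PowerSeries.C (R := ℝ)) (N+1), ← map_ofNat (PowerSeries.C (R := ℝ)) 2,
          ← map_mul, ← map_mul]
        congr 1
        push_cast [Nat.factorial_succ]
        ring
      have main : PowerSeries.C (2^(N+1) * ((N+1).factorial : ℝ)) * dd^(N+2)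
          = ee * d⁄dX ℝ (PowerSeries.C (2^N * (N.factorial : ℝ)) * dd^(N+1)) := by
        rw [deriv_C_mul, derivPowPS, deriv_dinv, hc, Nat.add_sub_cancel]
        linear_combination (-2 * ((N+1:ℕ) : ℝ⟦X⟧) *
          PowerSeries.C (2^N * (N.factorial : ℝ)) * dd^(N+2)) * hee
      rw [main, H, map_sum, Finset.mul_sum]
      have hterm : ∀ i ∈ Finset.Icc 1 N,
          ee * d⁄dX ℝ (PowerSeries.C (a i N) * (ee^(2*N-i) * Dit i))
          = PowerSeries.C (a i N * ((2*N-i : ℕ):ℝ)) * (ee^(2*(N+1)-i) * Dit i)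
            + PowerSeries.C (a i N) * (ee^(2*(N+1)-(i+1)) * Dit (i+1)) := by
        intro i hi
        obtain ⟨hi1, hiN⟩ := Finset.mem_Icc.mp hi
        have hDit1 : Dit (i+1) = d⁄dX ℝ (Dit i) := Function.iterate_succ_apply' _ _ _
        rw [deriv_C_mul, Derivation.leibniz, derivPowPS, deriv_einv, hDit1,
          smul_eq_mul, smul_eq_mul]
        rw [map_mul (PowerSeries.C (R := ℝ)), map_natCast (PowerSeries.C (R := ℝ))]
        have e1 : 2*(N+1)-i = (2*N-i-1) + 3 := by omega
        have e2 : 2*(N+1)-(i+1) = (2*N-i) + 1 := by omega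
        rw [e1, e2, pow_add, pow_add]
        ring
      rw [Finset.sum_congr rfl hterm, Finset.sum_add_distrib]
      set A : ℕ → ℝ⟦X⟧ := fun i =>
        PowerSeries.C (a i N * ((2*N-i : ℕ):ℝ)) * (ee^(2*(N+1)-i) * Dit i) with hA
      set g : ℕ → ℝ⟦X⟧ := fun j =>
        PowerSeries.C (a (j-1) N) * (ee^(2*(N+1)-j) * Dit j) with hg
      set T : ℕ → ℝ⟦X⟧ := fun i =>
        PowerSeries.C (a i (N+1)) * (ee^(2*(N+1)-i) * Dit i) with hT
      have hre : ∑ i ∈ Finset.Icc 1 N,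
          PowerSeries.C (a i N) * (ee^(2*(N+1)-(i+1)) * Dit (i+1))
          = ∑ j ∈ Finset.Icc 2 (N+1), g j := by
        have hmap : Finset.Icc 2 (N+1) = (Finset.Icc 1 N).map (addRightEmbedding 1) := by
          rw [Finset.map_add_right_Icc]
        rw [hmap, Finset.sum_map]
        apply Finset.sum_congr rfl
        intro i _
        simp only [addRightEmbedding_apply, hg, Nat.add_sub_cancel]
      have h1 : A 1 = T 1 := by
        simp only [hA, hT]
        congr 1
        rw [ha1 N hN]
        congr 1
        push_cast [Nat.cast_sub (by omega : 1 ≤ 2*N)]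
        ring
      have hNp : g (N+1) = T (N+1) := by
        simp only [hg, hT, Nat.add_sub_cancel]
        rw [hadiag N hN]
      have hmid : ∀ i ∈ Finset.Icc 2 N, A i + g i = T i := by
        intro i hi
        obtain ⟨hi2, hiN⟩ := Finset.mem_Icc.mp hi
        have hcast : ((2*N-i : ℕ):ℝ) = 2*(N:ℝ) - i := by
          push_cast [Nat.cast_sub (by omega : i ≤ 2*N)]; ring
        simp only [hA, hg, hT]
        rw [harec N i hi2 hiN, hcast]
        simp only [map_add, map_mul]
        ring
      have hsum : ∑ i ∈ Finset.Icc 2 N, A i + ∑ i ∈ Finset.Icc 2 N, g i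
          = ∑ i ∈ Finset.Icc 2 N, T i := by
        rw [← Finset.sum_add_distrib]; exact Finset.sum_congr rfl hmid
      have final : (∑ i ∈ Finset.Icc 1 N, A i) + (∑ j ∈ Finset.Icc 2 (N+1), g j)
          = ∑ i ∈ Finset.Icc 1 (N+1), T i := by
        rw [Icc_bot_split N hN, Finset.sum_insert (by simp),
          Icc_top_split N hN, Finset.sum_insert (by simp),
          Icc_bot_split (N+1) (by omega), Finset.sum_insert (by simp),
          Icc_top_split N hN, Finset.sum_insert (by simp),
          h1, hNp, ← hsum]
        ring
      rw [hre]
      exact final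

/-- The higher-order Chebyshev polynomial of the second kind `U_n^{(α)}(x)`,
the `n`-th coefficient of `(D⁻¹)^α`. -/
noncomputable def chebU (x : ℝ) (α n : ℕ) : ℝ :=
  PowerSeries.coeff n ((Dser x)⁻¹ ^ α)

/-- for `N ≥ 1`, `n ≥ 0` and real `x ≠ 0`,
`U_n^{(N+1)}(x) = (1/(2^N N!)) Σ_{i=1}^N a(i,N) Σ_{l=0}^n Σ_{j=0}^{l+i}
  C(2N+n-l-i-1, n-l) x^{i+l-2N-n} (l+i)_i p_j(x) p_{l+i-j}(x)`,
where the Legendre polynomial `p_n(x)` is the `n`-th coefficient of the unique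
power series `L` with constant coefficient `1` and `L² D = 1`, and `a` is the
family defined by the recursion `a(1,1) = 1`, `a(1,N+1) = (2N-1)a(1,N)`,
`a(N+1,N+1) = a(N,N)`, `a(i,N+1) = a(i-1,N) + (2N-i)a(i,N)` for `2 ≤ i ≤ N`. -/
theorem stmt7
    (a : ℕ → ℕ → ℝ)
    (ha11 : a 1 1 = 1)
    (ha1 : ∀ N : ℕ, 1 ≤ N → a 1 (N + 1) = (2 * (N : ℝ) - 1) * a 1 N)
    (hadiag : ∀ N : ℕ, 1 ≤ N → a (N + 1) (N + 1) = a N N)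
    (harec : ∀ N i : ℕ, 2 ≤ i → i ≤ N →
      a i (N + 1) = a (i - 1) N + (2 * (N : ℝ) - (i : ℝ)) * a i N)
    (x : ℝ) (hx : x ≠ 0)
    (L : PowerSeries ℝ) (hL0 : PowerSeries.constantCoeff L = 1)
    (hL : L ^ 2 * Dser x = 1)
    (N n : ℕ) (hN : 1 ≤ N) :
    chebU x (N + 1) n =
      (1 / (2 ^ N * (Nat.factorial N : ℝ))) *
        ∑ i ∈ Finset.Icc 1 N, a i N *
          ∑ l ∈ Finset.range (n + 1), ∑ j ∈ Finset.range (l + i + 1),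
            (Nat.choose (2 * N + n - l - i - 1) (n - l) : ℝ) *
              x ^ ((i : ℤ) + (l : ℤ) - 2 * (N : ℤ) - (n : ℤ)) *
              fallingFactorial ((l : ℝ) + (i : ℝ)) i *
              PowerSeries.coeff j L * PowerSeries.coeff (l + i - j) L := by
  have hc0 : (2:ℝ)^N * (N.factorial : ℝ) ≠ 0 := by positivity
  have hL2 : (Dser x)⁻¹ = L^2 := by
    have hD := DinvD x
    calc (Dser x)⁻¹ = 1 * (Dser x)⁻¹ := (one_mul _).symm
      _ = (L^2 * Dser x) * (Dser x)⁻¹ := by rw [hL]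
      _ = L^2 * (Dser x * (Dser x)⁻¹) := by rw [mul_assoc]
      _ = L^2 := by rw [hD, mul_one]
  have hkey := key_s7 x hx a ha11 ha1 hadiag harec N hN
  have hco := congrArg (PowerSeries.coeff n) hkey
  rw [PowerSeries.coeff_C_mul, map_sum] at hco
  have hterm : ∀ i ∈ Finset.Icc 1 N,
      PowerSeries.coeff n (PowerSeries.C (a i N) *
        (((Eser x)⁻¹)^(2*N - i) * (d⁄dX ℝ)^[i] (Dser x)⁻¹))
      = a i N * ∑ l ∈ Finset.range (n + 1), ∑ j ∈ Finset.range (l + i + 1),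
          (Nat.choose (2 * N + n - l - i - 1) (n - l) : ℝ) *
            x ^ ((i : ℤ) + (l : ℤ) - 2 * (N : ℤ) - (n : ℤ)) *
            fallingFactorial ((l : ℝ) + (i : ℝ)) i *
            PowerSeries.coeff j L * PowerSeries.coeff (l + i - j) L := by
    intro i hi
    obtain ⟨hi1, hiN⟩ := Finset.mem_Icc.mp hi
    rw [PowerSeries.coeff_C_mul]
    congr 1
    rw [mul_comm (((Eser x)⁻¹)^(2*N-i)), PowerSeries.coeff_mul,
      Finset.Nat.sum_antidiagonal_eq_sum_range_succ_mk]
    apply Finset.sum_congr rfl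
    intro l hl
    have hln : l ≤ n := by have := Finset.mem_range.mp hl; omega
    rw [coeff_iter_deriv, hL2, coeff_einv_pow hx (2*N-i) (by omega)]
    rw [pow_two, PowerSeries.coeff_mul, Finset.Nat.sum_antidiagonal_eq_sum_range_succ_mk]
    rw [Finset.mul_sum, Finset.sum_mul]
    apply Finset.sum_congr rfl
    intro j hj
    have hchoose : 2*N - i - 1 + (n - l) = 2*N + n - l - i - 1 := by omega
    have hexp : (-(((2*N - i : ℕ)):ℤ) - ((n - l : ℕ):ℤ)) = (i:ℤ) + l - 2*(N:ℤ) - n := by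
      push_cast [Nat.cast_sub (by omega : i ≤ 2*N), Nat.cast_sub hln]; ring
    rw [hchoose, hexp]
    ring
  rw [Finset.sum_congr rfl hterm] at hco
  unfold chebU
  rw [← hco]
  field_simp
end
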